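/- For any constants c, k ≠ 0 and ξ₀, the function u(x,t) = (c−k)/(2k) + 840·c·k³/(k·x − c·t − ξ₀)⁴ satisfies the Rosenau equation u_t + u_x + (u²)_x + u_xxxxt = 0 at every point (x,t) with k·x − c·t − ξ₀ ≠ 0. -/

import Mathlib

set_option maxHeartbeats 1000000

lemma aux_hasDerivAt {L : ℝ → ℝ} {a x : ℝ} (hL : HasDerivAt L a x) (h : L x ≠ 0)
    (C : ℝ) (n : ℕ) (hn : n ≠ 0) :
    HasDerivAt (fun y => C / (L y) ^ n) (-(n : ℝ) * a * C / (L x) ^ (n + 1)) x := by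
  have h2 : HasDerivAt (fun y => (L y) ^ n) ((n : ℝ) * (L x) ^ (n - 1) * a) x := hL.pow n
  have h3 := (hasDerivAt_const x C).div h2 (pow_ne_zero n h)
  refine h3.congr_deriv (Eq.symm ?_)
  have hpow : (L x) ^ (n - 1) * (L x * (L x) ^ n) = (L x) ^ (n * 2) := by
    rw [← pow_succ', ← pow_add]; congr 1; omega
  rw [div_eq_div_iff (pow_ne_zero _ h) (pow_ne_zero 2 (pow_ne_zero n h))]
  linear_combination ((n : ℝ) * a * C) * hpow

lemma deriv_congr_open {f g : ℝ → ℝ} {U : Set ℝ} (hU : IsOpen U) {x : ℝ} (hx : x ∈ U)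
    (hfg : ∀ y ∈ U, f y = g y) : deriv f x = deriv g x :=
  Filter.EventuallyEq.deriv_eq (Filter.eventuallyEq_of_mem (hU.mem_nhds hx) hfg)

lemma iter4 (k c ξ₀ A B s x : ℝ) (h : k * x - c * s - ξ₀ ≠ 0) :
    iteratedDeriv 4 (fun y => A + B / (k * y - c * s - ξ₀) ^ 4) x
      = 840 * k ^ 4 * B / (k * x - c * s - ξ₀) ^ 8 := by
  have hcont : Continuous fun y : ℝ => k * y - c * s - ξ₀ :=
    ((continuous_const.mul continuous_id).sub continuous_const).sub continuous_const
  set U : Set ℝ := {y | k * y - c * s - ξ₀ ≠ 0} with hUdef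
  have hU : IsOpen U := IsOpen.preimage hcont isOpen_compl_singleton
  have hx : x ∈ U := h
  have hL : ∀ y : ℝ, HasDerivAt (fun z => k * z - c * s - ξ₀) k y := fun y => by
    simpa using (((hasDerivAt_id y).const_mul k).sub_const (c * s)).sub_const ξ₀
  have h1 : ∀ y ∈ U, deriv (fun z => A + B / (k * z - c * s - ξ₀) ^ 4) y
      = (-4) * k * B / (k * y - c * s - ξ₀) ^ 5 := fun y hy => by
    have := ((aux_hasDerivAt (hL y) hy B 4 (by norm_num)).const_add A).deriv
    rw [this]; norm_num
  have h2 : ∀ y ∈ U, deriv (deriv (fun z => A + B / (k * z - c * s - ξ₀) ^ 4)) y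
      = 20 * k ^ 2 * B / (k * y - c * s - ξ₀) ^ 6 := fun y hy => by
    rw [deriv_congr_open hU hy h1,
      (aux_hasDerivAt (hL y) hy ((-4) * k * B) 5 (by norm_num)).deriv]
    norm_num; ring
  have h3 : ∀ y ∈ U, deriv (deriv (deriv (fun z => A + B / (k * z - c * s - ξ₀) ^ 4))) y
      = (-120) * k ^ 3 * B / (k * y - c * s - ξ₀) ^ 7 := fun y hy => by
    rw [deriv_congr_open hU hy h2,
      (aux_hasDerivAt (hL y) hy (20 * k ^ 2 * B) 6 (by norm_num)).deriv]
    norm_num; ring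
  have e4 : iteratedDeriv 4 (fun y => A + B / (k * y - c * s - ξ₀) ^ 4)
      = deriv (deriv (deriv (deriv (fun y => A + B / (k * y - c * s - ξ₀) ^ 4)))) := by
    rw [show (4 : ℕ) = 0 + 1 + 1 + 1 + 1 from rfl]
    simp only [iteratedDeriv_succ, iteratedDeriv_zero]
  rw [e4, deriv_congr_open hU hx h3,
    (aux_hasDerivAt (hL x) hx ((-120) * k ^ 3 * B) 7 (by norm_num)).deriv]
  norm_num; ring

theorem rosenau_rational_traveling_wave
    (c k ξ₀ : ℝ) (hc : c ≠ 0) (hk : k ≠ 0) :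
    ∀ x t : ℝ, k * x - c * t - ξ₀ ≠ 0 →
      (letI u : ℝ → ℝ → ℝ := fun x t =>
        (c - k) / (2 * k) + 840 * c * k ^ 3 / (k * x - c * t - ξ₀) ^ 4
      deriv (fun s => u x s) t
        + deriv (fun y => u y t) x
        + deriv (fun y => (u y t) ^ 2) x
        + deriv (fun s => iteratedDeriv 4 (fun y => u y s) x) t = 0) := by
  intro x t hξ
  dsimp only
  set A : ℝ := (c - k) / (2 * k) with hA
  set B : ℝ := 840 * c * k ^ 3 with hB
  have hLt : HasDerivAt (fun s => k * x - c * s - ξ₀) (-c) t := by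
    simpa using (((hasDerivAt_id t).const_mul c).const_sub (k * x)).sub_const ξ₀
  have hLx : HasDerivAt (fun y => k * y - c * t - ξ₀) k x := by
    simpa using (((hasDerivAt_id x).const_mul k).sub_const (c * t)).sub_const ξ₀
  -- term 1 : u_t
  have T1 : deriv (fun s => A + B / (k * x - c * s - ξ₀) ^ 4) t
      = 4 * c * B / (k * x - c * t - ξ₀) ^ 5 := by
    rw [((aux_hasDerivAt hLt hξ B 4 (by norm_num)).const_add A).deriv]
    norm_num
  -- term 2 : u_x
  have hux : HasDerivAt (fun y => A + B / (k * y - c * t - ξ₀) ^ 4)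
      (-(4 : ℝ) * k * B / (k * x - c * t - ξ₀) ^ (4 + 1)) x :=
    (aux_hasDerivAt hLx hξ B 4 (by norm_num)).const_add A
  have T2 : deriv (fun y => A + B / (k * y - c * t - ξ₀) ^ 4) x
      = (-4) * k * B / (k * x - c * t - ξ₀) ^ 5 := by
    rw [hux.deriv]
  -- term 3 : (u^2)_x
  have T3 : deriv (fun y => (A + B / (k * y - c * t - ξ₀) ^ 4) ^ 2) x
      = 2 * (A + B / (k * x - c * t - ξ₀) ^ 4)
        * ((-4) * k * B / (k * x - c * t - ξ₀) ^ 5) := by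
    rw [(hux.fun_pow 2).deriv]; norm_num
  -- term 4
  have hcont : Continuous fun s : ℝ => k * x - c * s - ξ₀ :=
    (continuous_const.sub (continuous_const.mul continuous_id)).sub continuous_const
  set V : Set ℝ := {s | k * x - c * s - ξ₀ ≠ 0} with hVdef
  have hV : IsOpen V := IsOpen.preimage hcont isOpen_compl_singleton
  have htV : t ∈ V := hξ
  have T4 : deriv (fun s => iteratedDeriv 4
      (fun y => A + B / (k * y - c * s - ξ₀) ^ 4) x) t
      = 8 * c * (840 * k ^ 4 * B) / (k * x - c * t - ξ₀) ^ 9 := by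
    rw [deriv_congr_open hV htV (fun s hs => iter4 k c ξ₀ A B s x hs),
      (aux_hasDerivAt hLt hξ (840 * k ^ 4 * B) 8 (by norm_num)).deriv]
    norm_num
  rw [T1, T2, T3, T4]
  have h4 : (k * x - c * t - ξ₀) ^ 4 ≠ 0 := pow_ne_zero _ hξ
  rw [hA, hB]
  field_simp
  ring
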